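/- Let μ be the uniform distribution over codewords of a binary linear code C ⊆ F_2^n with dual distance at least ζn and unique decoding radius ζn/2 (any two distinct codewords are at Hamming distance > ζn). Set δ = min{1/(16e), ζ/8}. Then the test 'accept iff there exists a codeword c within Hamming distance 2δn of the input' distinguishes T_δ μ from the uniform distribution ν on {0,1}^n with probability 1 - o(1): under T_δ μ such a codeword exists w.h.p., while under ν no codeword is within distance 2δn w.h.p. -/

import Mathlib

open scoped Classical
open Finset

lemma stmt18_zmod2_ne_add_one (a : ZMod 2) : a ≠ a + 1 := by revert a; decide

lemma stmt18_zmod2_eq_add_one {a b : ZMod 2} (h : a ≠ b) : a + 1 = b := by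
  revert h; revert a b; decide

lemma stmt18_sphere_card (n j : ℕ) (c : Fin n → ZMod 2) :
    ((univ : Finset (Fin n → ZMod 2)).filter fun z => hammingDist c z = j).card = n.choose j := by
  have hp : ((univ : Finset (Fin n)).powersetCard j).card = n.choose j := by
    simp [Finset.card_powersetCard]
  rw [← hp]
  have key : ∀ s : Finset (Fin n),
      (univ.filter fun i => c i ≠ (if i ∈ s then c i + 1 else c i)) = s := by
    intro s; ext i
    by_cases h : i ∈ s <;> simp [h, stmt18_zmod2_ne_add_one (c i)]
  refine Finset.card_nbij' (fun z => univ.filter fun i => c i ≠ z i)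
    (fun s => fun i => if i ∈ s then c i + 1 else c i) ?_ ?_ ?_ ?_
  · intro z hz
    rw [Finset.mem_coe, Finset.mem_filter] at hz
    rw [Finset.mem_coe, Finset.mem_powersetCard]
    exact ⟨Finset.subset_univ _, hz.2⟩
  · intro s hs
    rw [Finset.mem_coe, Finset.mem_powersetCard] at hs
    rw [Finset.mem_coe, Finset.mem_filter]
    refine ⟨Finset.mem_univ _, ?_⟩
    show (univ.filter fun i => c i ≠ (if i ∈ s then c i + 1 else c i)).card = j
    rw [key s]; exact hs.2
  · intro z hz
    funext i
    simp only [Finset.mem_filter, Finset.mem_univ, true_and]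
    by_cases h : c i ≠ z i
    · rw [if_pos h]; exact stmt18_zmod2_eq_add_one h
    · rw [if_neg h]; push_neg at h; exact h
  · intro s hs
    exact key s

lemma stmt18_ball_card_le (n r : ℕ) (c : Fin n → ZMod 2) :
    ((univ : Finset (Fin n → ZMod 2)).filter fun z => hammingDist c z ≤ r).card ≤
      ∑ j ∈ range (r + 1),
        ((univ : Finset (Fin n → ZMod 2)).filter fun z => hammingDist c z = j).card := by
  calc ((univ : Finset (Fin n → ZMod 2)).filter fun z => hammingDist c z ≤ r).card
      ≤ ((range (r+1)).biUnion fun j => (univ : Finset (Fin n → ZMod 2)).filter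
          fun z => hammingDist c z = j).card := by
        apply Finset.card_le_card
        intro z hz
        rw [Finset.mem_filter] at hz
        rw [Finset.mem_biUnion]
        exact ⟨hammingDist c z, Finset.mem_range.2 (Nat.lt_succ_of_le hz.2),
          Finset.mem_filter.2 ⟨Finset.mem_univ _, rfl⟩⟩
    _ ≤ _ := Finset.card_biUnion_le

lemma stmt18_choose_step (n m : ℕ) (h : 3 * m + 2 ≤ n) : 2 * n.choose m ≤ n.choose (m + 1) := by
  have key : n.choose (m+1) * (m+1) = n.choose m * (n - m) := Nat.choose_succ_right_eq n m
  have h2 : 2 * (m + 1) ≤ n - m := by omega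
  have : 2 * n.choose m * (m+1) ≤ n.choose (m+1) * (m+1) := by
    rw [key]
    calc 2 * n.choose m * (m+1) = n.choose m * (2 * (m+1)) := by ring
      _ ≤ n.choose m * (n - m) := Nat.mul_le_mul_left _ h2
  exact Nat.le_of_mul_le_mul_right this (Nat.succ_pos m)

lemma stmt18_choose_chain (n r j i : ℕ) (hji : j + i ≤ 2 * r) (h6 : 6 * r ≤ n + 1) :
    2 ^ i * n.choose j ≤ n.choose (j + i) := by
  induction i with
  | zero => simp
  | succ i ih =>
    have h1 : 2 ^ i * n.choose j ≤ n.choose (j + i) := ih (by omega)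
    have h2 : 2 * n.choose (j + i) ≤ n.choose (j + i + 1) := by
      apply stmt18_choose_step
      omega
    calc 2 ^ (i+1) * n.choose j = 2 * (2 ^ i * n.choose j) := by ring
      _ ≤ 2 * n.choose (j + i) := Nat.mul_le_mul_left _ h1
      _ ≤ n.choose (j + i + 1) := h2
      _ = n.choose (j + (i+1)) := by ring_nf

lemma stmt18_choose_to_double (n r j : ℕ) (hj : j ≤ r) (h6 : 6 * r ≤ n + 1) :
    2 ^ r * n.choose j ≤ n.choose (2 * r) := by
  have h := stmt18_choose_chain n r j (2*r - j) (by omega) h6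
  rw [show j + (2*r - j) = 2*r by omega] at h
  calc 2 ^ r * n.choose j ≤ 2 ^ (2*r - j) * n.choose j :=
        Nat.mul_le_mul_right _ (Nat.pow_le_pow_right (by norm_num) (by omega))
    _ ≤ n.choose (2*r) := h

lemma stmt18_sum_bool_weight (n : ℕ) (a b : ℝ) :
    ∑ f : Fin n → Bool, a ^ (univ.filter fun i => f i = true).card
        * b ^ (n - (univ.filter fun i => f i = true).card) = (a + b) ^ n := by
  have h1 : ∀ f : Fin n → Bool,
      (∏ i, if f i then a else b) = a ^ (univ.filter fun i => f i = true).card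
        * b ^ (n - (univ.filter fun i => f i = true).card) := by
    intro f
    rw [Finset.prod_ite (fun _ => a) (fun _ => b), Finset.prod_const, Finset.prod_const]
    congr 1
    have hc : #(filter (fun a => f a = true) univ) + #(filter (fun a => ¬f a = true) univ) = n := by
      have h0 := Finset.card_filter_add_card_filter_not
        (s := (univ : Finset (Fin n))) (p := fun a => f a = true)
      simpa using h0
    have hc2 : #(filter (fun x => ¬ f x = true) univ)
        = n - #(filter (fun i => f i = true) univ) := by omega
    rw [hc2]
  calc ∑ f : Fin n → Bool, a ^ (univ.filter fun i => f i = true).card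
        * b ^ (n - (univ.filter fun i => f i = true).card)
      = ∑ f : Fin n → Bool, ∏ i, if f i then a else b :=
        Finset.sum_congr rfl (fun f _ => (h1 f).symm)
    _ = ∑ f ∈ Fintype.piFinset (fun _ : Fin n => (univ : Finset Bool)),
          ∏ i, if f i then a else b := by rw [Fintype.piFinset_univ]
    _ = ∏ i : Fin n, ∑ t ∈ (univ : Finset Bool), (if t then a else b) :=
        (Finset.prod_univ_sum (fun _ : Fin n => (univ : Finset Bool))
          (fun _ t => if t then a else b)).symm
    _ = (a + b) ^ n := by simp [Fintype.sum_bool]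

lemma stmt18_packing (n r : ℕ) (S : Finset (Fin n → ZMod 2))
    (hdisj : ∀ c ∈ S, ∀ c' ∈ S, c ≠ c' → 4 * r < hammingDist c c') :
    S.card * n.choose (2 * r) ≤ 2 ^ n := by
  have hdis : ∀ c ∈ S, ∀ c' ∈ S, c ≠ c' →
      Disjoint ((univ : Finset (Fin n → ZMod 2)).filter fun z => hammingDist c z = 2*r)
        ((univ : Finset (Fin n → ZMod 2)).filter fun z => hammingDist c' z = 2*r) := by
    intro c hc c' hc' hne
    rw [Finset.disjoint_left]
    intro z hz hz'
    rw [Finset.mem_filter] at hz hz'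
    have ht : hammingDist c c' ≤ hammingDist c z + hammingDist z c' := hammingDist_triangle c z c'
    rw [hammingDist_comm z c'] at ht
    have := hdisj c hc c' hc' hne
    omega
  calc S.card * n.choose (2*r)
      = ∑ c ∈ S, ((univ : Finset (Fin n → ZMod 2)).filter fun z => hammingDist c z = 2*r).card := by
        rw [Finset.sum_congr rfl fun c _ => stmt18_sphere_card n (2*r) c, Finset.sum_const,
          smul_eq_mul]
    _ = (S.biUnion fun c =>
          (univ : Finset (Fin n → ZMod 2)).filter fun z => hammingDist c z = 2*r).card :=
        (Finset.card_biUnion hdis).symm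
    _ ≤ (univ : Finset (Fin n → ZMod 2)).card := Finset.card_le_card (Finset.subset_univ _)
    _ = 2 ^ n := by simp [Finset.card_univ]

lemma stmt18_union_bound (n r : ℕ) (S : Finset (Fin n → ZMod 2)) (h6 : 6 * r ≤ n + 1) :
    2 ^ r * ((univ : Finset (Fin n → ZMod 2)).filter fun z => ∃ c ∈ S, hammingDist c z ≤ r).card
      ≤ S.card * ((r + 1) * n.choose (2 * r)) := by
  have hsub : ((univ : Finset (Fin n → ZMod 2)).filter fun z => ∃ c ∈ S, hammingDist c z ≤ r)
      ⊆ S.biUnion fun c => (univ : Finset (Fin n → ZMod 2)).filter fun z => hammingDist c z ≤ r := by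
    intro z hz
    rw [Finset.mem_filter] at hz
    obtain ⟨c, hc, hcz⟩ := hz.2
    exact Finset.mem_biUnion.2 ⟨c, hc, Finset.mem_filter.2 ⟨Finset.mem_univ _, hcz⟩⟩
  have hball : ∀ c : Fin n → ZMod 2,
      2 ^ r * ((univ : Finset (Fin n → ZMod 2)).filter fun z => hammingDist c z ≤ r).card
        ≤ (r + 1) * n.choose (2 * r) := by
    intro c
    calc 2 ^ r * ((univ : Finset (Fin n → ZMod 2)).filter fun z => hammingDist c z ≤ r).card
        ≤ 2 ^ r * ∑ j ∈ range (r+1), ((univ : Finset (Fin n → ZMod 2)).filter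
            fun z => hammingDist c z = j).card :=
          Nat.mul_le_mul_left _ (stmt18_ball_card_le n r c)
      _ = ∑ j ∈ range (r+1), 2 ^ r * n.choose j := by
          rw [Finset.mul_sum]
          exact Finset.sum_congr rfl fun j _ => by rw [stmt18_sphere_card]
      _ ≤ ∑ j ∈ range (r+1), n.choose (2*r) :=
          Finset.sum_le_sum fun j hj =>
            stmt18_choose_to_double n r j (Nat.lt_succ_iff.1 (Finset.mem_range.1 hj)) h6
      _ = (r + 1) * n.choose (2*r) := by rw [Finset.sum_const, Finset.card_range, smul_eq_mul]
  calc 2 ^ r * ((univ : Finset (Fin n → ZMod 2)).filter fun z => ∃ c ∈ S, hammingDist c z ≤ r).card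
      ≤ 2 ^ r * (S.biUnion fun c => (univ : Finset (Fin n → ZMod 2)).filter
          fun z => hammingDist c z ≤ r).card := Nat.mul_le_mul_left _ (Finset.card_le_card hsub)
    _ ≤ 2 ^ r * ∑ c ∈ S, ((univ : Finset (Fin n → ZMod 2)).filter
          fun z => hammingDist c z ≤ r).card := Nat.mul_le_mul_left _ Finset.card_biUnion_le
    _ = ∑ c ∈ S, 2 ^ r * ((univ : Finset (Fin n → ZMod 2)).filter
          fun z => hammingDist c z ≤ r).card := Finset.mul_sum _ _ _
    _ ≤ ∑ c ∈ S, (r + 1) * n.choose (2*r) := Finset.sum_le_sum fun c _ => hball c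
    _ = S.card * ((r + 1) * n.choose (2*r)) := by rw [Finset.sum_const, smul_eq_mul]

lemma stmt18_triple_sum_eval (n : ℕ) (K : ℝ) (S : Finset (Fin n → ZMod 2)) (a b : ℝ) :
    (∑ c ∈ S, ∑ f : Fin n → Bool, ∑ _y : Fin n → ZMod 2,
      K * a ^ (univ.filter fun i => f i = true).card
        * b ^ (n - (univ.filter fun i => f i = true).card) * (1 / 2^n))
    = S.card * (K * (a+b)^n) := by
  have hcard : Fintype.card (Fin n → ZMod 2) = 2 ^ n := by simp
  have h2 : (2:ℝ)^n ≠ 0 := by positivity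
  calc (∑ c ∈ S, ∑ f : Fin n → Bool, ∑ _y : Fin n → ZMod 2,
      K * a ^ (univ.filter fun i => f i = true).card
        * b ^ (n - (univ.filter fun i => f i = true).card) * (1 / 2^n))
      = ∑ _c ∈ S, ∑ f : Fin n → Bool,
          K * (a ^ (univ.filter fun i => f i = true).card
            * b ^ (n - (univ.filter fun i => f i = true).card)) := by
        refine Finset.sum_congr rfl fun c _ => Finset.sum_congr rfl fun f _ => ?_
        rw [Finset.sum_const, Finset.card_univ, hcard, nsmul_eq_mul]
        push_cast
        field_simp
    _ = ∑ _c ∈ S, K * (a + b) ^ n := by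
        refine Finset.sum_congr rfl fun c _ => ?_
        rw [← Finset.mul_sum, stmt18_sum_bool_weight]
    _ = S.card * (K * (a+b)^n) := by rw [Finset.sum_const, nsmul_eq_mul]

set_option maxHeartbeats 2000000 in
theorem stmt18 (ζ : ℝ) (hζ : 0 < ζ)
    (C : (n : ℕ) → Submodule (ZMod 2) (Fin n → ZMod 2))
    (hdual : ∀ n, ∀ y : Fin n → ZMod 2, y ≠ 0 →
      (∀ c ∈ C n, ∑ i, y i * c i = 0) → ζ * n ≤ (hammingNorm y : ℝ))
    (hdist : ∀ n, ∀ c ∈ C n, ∀ c' ∈ C n, c ≠ c' → ζ * n < (hammingDist c c' : ℝ))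
    (δ : ℝ) (hδ : δ = min (1 / (16 * Real.exp 1)) (ζ / 8)) :
    Filter.Tendsto (fun n : ℕ =>
      ∑ c ∈ Finset.univ.filter (fun c : Fin n → ZMod 2 => c ∈ C n),
        ∑ b : Fin n → Bool, ∑ y : Fin n → ZMod 2,
          (1 / (Nat.card (C n) : ℝ))
            * δ ^ (Finset.univ.filter (fun i => b i = true)).card
            * (1 - δ) ^ (n - (Finset.univ.filter (fun i => b i = true)).card)
            * (1 / 2 ^ n)
            * (if ∃ c' ∈ C n,
                (hammingDist c' (fun i => if b i then y i else c i) : ℝ) ≤ 2 * δ * n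
              then (1 : ℝ) else 0))
      Filter.atTop (nhds 1) ∧
    Filter.Tendsto (fun n : ℕ =>
      (Nat.card {z : Fin n → ZMod 2 // ∃ c ∈ C n, (hammingDist c z : ℝ) ≤ 2 * δ * n} : ℝ)
        / 2 ^ n)
      Filter.atTop (nhds 0) := by
  have he : (2.7:ℝ) < Real.exp 1 := by
    have := Real.exp_one_gt_d9; linarith
  have hδpos : 0 < δ := by
    rw [hδ]
    apply lt_min
    · positivity
    · linarith
  have hδle : δ ≤ 1 / (16 * Real.exp 1) := by rw [hδ]; exact min_le_left _ _
  have hδζ : δ ≤ ζ / 8 := by rw [hδ]; exact min_le_right _ _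
  have hδsmall : δ ≤ 1 / 43 := by
    have h1 : (16:ℝ) * Real.exp 1 ≥ 43 := by nlinarith
    have : 1 / (16 * Real.exp 1) ≤ 1 / 43 := by
      apply one_div_le_one_div_of_le <;> linarith
    linarith
  have hδ1 : δ < 1 := by linarith
  -- r n = floor of 2δn
  set r : ℕ → ℕ := fun n => ⌊2 * δ * (n:ℕ)⌋₊ with hr
  have hrle : ∀ n : ℕ, (r n : ℝ) ≤ 2 * δ * n := fun n => Nat.floor_le (by positivity)
  have h6r : ∀ n : ℕ, 6 * r n ≤ n + 1 := by
    intro n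
    have : (6 * r n : ℝ) ≤ n := by
      have h1 := hrle n
      have h2 : 2 * δ * (n:ℝ) ≤ (n:ℝ) / 6 := by
        have : (n:ℝ) ≥ 0 := Nat.cast_nonneg n
        nlinarith
      push_cast
      linarith
    have : (6 * r n : ℕ) ≤ (n:ℕ) := by exact_mod_cast this
    omega
  have h2r : ∀ n : ℕ, 2 * r n ≤ n := by
    intro n
    have h6 := h6r n
    omega
  -- the codeword finset
  set S : (n : ℕ) → Finset (Fin n → ZMod 2) :=
    fun n => univ.filter (fun c : Fin n → ZMod 2 => c ∈ C n) with hS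
  have hSmem : ∀ n (c : Fin n → ZMod 2), c ∈ S n ↔ c ∈ C n := by
    intro n c; rw [hS]; simp
  have hSne : ∀ n, (S n).Nonempty := fun n => ⟨0, (hSmem n 0).2 (zero_mem (C n))⟩
  have hKcard : ∀ n, Nat.card (C n) = (S n).card := by
    intro n
    rw [Nat.card_eq_fintype_card]
    rw [hS]
    exact Fintype.card_subtype _
  have hKpos : ∀ n, (0:ℝ) < (Nat.card (C n) : ℝ) := by
    intro n
    rw [hKcard n]
    exact_mod_cast Finset.card_pos.2 (hSne n)
  have hdisjn : ∀ n, ∀ c ∈ S n, ∀ c' ∈ S n, c ≠ c' → 4 * r n < hammingDist c c' := by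
    intro n c hc c' hc' hne
    have hd := hdist n c ((hSmem n c).1 hc) c' ((hSmem n c').1 hc') hne
    have : (4 * r n : ℝ) < hammingDist c c' := by
      have h1 := hrle n
      have h8 : 8 * δ * (n:ℝ) ≤ ζ * n := by
        have : (n:ℝ) ≥ 0 := Nat.cast_nonneg n
        nlinarith
      push_cast
      linarith
    exact_mod_cast this
  -- PART 2
  have part2 : Filter.Tendsto (fun n : ℕ =>
      (Nat.card {z : Fin n → ZMod 2 // ∃ c ∈ C n, (hammingDist c z : ℝ) ≤ 2 * δ * n} : ℝ)
        / 2 ^ n) Filter.atTop (nhds 0) := by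
    have hbound : ∀ n : ℕ,
        (Nat.card {z : Fin n → ZMod 2 // ∃ c ∈ C n, (hammingDist c z : ℝ) ≤ 2 * δ * n} : ℝ)
          / 2 ^ n ≤ ((r n : ℝ) + 1) / 2 ^ (r n) := by
      intro n
      have hNcard : Nat.card {z : Fin n → ZMod 2 // ∃ c ∈ C n, (hammingDist c z : ℝ) ≤ 2 * δ * n}
          = ((univ : Finset (Fin n → ZMod 2)).filter
              fun z => ∃ c ∈ S n, hammingDist c z ≤ r n).card := by
        rw [Nat.card_eq_fintype_card]
        rw [Fintype.card_subtype]
        congr 1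
        apply Finset.filter_congr
        intro z _
        constructor
        · rintro ⟨c, hc, hcz⟩
          exact ⟨c, (hSmem n c).2 hc, Nat.le_floor hcz⟩
        · rintro ⟨c, hc, hcz⟩
          refine ⟨c, (hSmem n c).1 hc, ?_⟩
          calc (hammingDist c z : ℝ) ≤ (r n : ℝ) := by exact_mod_cast hcz
            _ ≤ 2 * δ * n := hrle n
      have hnat : 2 ^ (r n) * ((univ : Finset (Fin n → ZMod 2)).filter
          fun z => ∃ c ∈ S n, hammingDist c z ≤ r n).card ≤ (r n + 1) * 2 ^ n := by
        calc 2 ^ (r n) * ((univ : Finset (Fin n → ZMod 2)).filter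
            fun z => ∃ c ∈ S n, hammingDist c z ≤ r n).card
            ≤ (S n).card * ((r n + 1) * n.choose (2 * r n)) :=
              stmt18_union_bound n (r n) (S n) (h6r n)
          _ = (r n + 1) * ((S n).card * n.choose (2 * r n)) := by ring
          _ ≤ (r n + 1) * 2 ^ n :=
              Nat.mul_le_mul_left _ (stmt18_packing n (r n) (S n) (hdisjn n))
      rw [hNcard]
      rw [div_le_div_iff₀ (by positivity) (by positivity)]
      calc ((univ : Finset (Fin n → ZMod 2)).filter
            fun z => ∃ c ∈ S n, hammingDist c z ≤ r n).card * (2:ℝ) ^ (r n)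
          ≤ ((r n : ℝ) + 1) * 2 ^ n := by exact_mod_cast Nat.le_of_eq (by ring) |>.trans hnat
        _ = _ := rfl
    have hnonneg : ∀ n : ℕ, (0:ℝ) ≤
        (Nat.card {z : Fin n → ZMod 2 // ∃ c ∈ C n, (hammingDist c z : ℝ) ≤ 2 * δ * n} : ℝ)
          / 2 ^ n := fun n => by positivity
    have hg : Filter.Tendsto (fun k : ℕ => ((k:ℝ) + 1) / 2 ^ k) Filter.atTop (nhds 0) := by
      have ha : Filter.Tendsto (fun k : ℕ => (k:ℝ) ^ 1 / 2 ^ k) Filter.atTop (nhds 0) :=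
        tendsto_pow_const_div_const_pow_of_one_lt 1 one_lt_two
      have hb : Filter.Tendsto (fun k : ℕ => (1:ℝ) / 2 ^ k) Filter.atTop (nhds 0) := by
        have := tendsto_pow_atTop_nhds_zero_of_lt_one
          (by norm_num : (0:ℝ) ≤ 1/2) (by norm_num : (1/2:ℝ) < 1)
        convert this using 2 with k
        rw [div_pow, one_pow]
      have := ha.add hb
      rw [add_zero] at this
      convert this using 2 with k
      rw [pow_one, ← add_div]
    have hrt : Filter.Tendsto (fun n : ℕ => r n) Filter.atTop Filter.atTop :=
      tendsto_nat_floor_mul_atTop (2 * δ) (by positivity)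
    exact squeeze_zero hnonneg hbound (hg.comp hrt)
  refine ⟨?_, part2⟩
  -- PART 1
  set a : ℝ := δ * (2 * Real.log 2 - 1) with ha
  have hl2 : (0.6931471803:ℝ) < Real.log 2 := Real.log_two_gt_d9
  have hapos : 0 < a := by
    rw [ha]
    apply mul_pos hδpos
    nlinarith
  set G : ℕ → ℝ := fun n =>
    ∑ c ∈ S n, ∑ b : Fin n → Bool, ∑ y : Fin n → ZMod 2,
      (1 / (Nat.card (C n) : ℝ))
        * δ ^ (univ.filter (fun i => b i = true)).card
        * (1 - δ) ^ (n - (univ.filter (fun i => b i = true)).card)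
        * (1 / 2 ^ n)
        * (if ∃ c' ∈ C n,
            (hammingDist c' (fun i => if b i then y i else c i) : ℝ) ≤ 2 * δ * n
          then (0 : ℝ) else 1) with hG
  have hGnonneg : ∀ n, 0 ≤ G n := by
    intro n
    rw [hG]
    apply Finset.sum_nonneg; intro c _
    apply Finset.sum_nonneg; intro b _
    apply Finset.sum_nonneg; intro y _
    have h1 : (0:ℝ) ≤ (1 - δ) ^ (n - (univ.filter (fun i => b i = true)).card) :=
      pow_nonneg (by linarith) _
    have h2 : (0:ℝ) ≤ if ∃ c' ∈ C n,
        (hammingDist c' (fun i => if b i then y i else c i) : ℝ) ≤ 2 * δ * n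
        then (0 : ℝ) else 1 := by split <;> norm_num
    have h3 : (0:ℝ) ≤ 1 / (Nat.card (C n) : ℝ) := by positivity
    have h4 : (0:ℝ) ≤ δ ^ (univ.filter (fun i => b i = true)).card := by positivity
    have h5 : (0:ℝ) ≤ 1 / (2:ℝ) ^ n := by positivity
    apply mul_nonneg (mul_nonneg (mul_nonneg (mul_nonneg h3 h4) h1) h5) h2
  have hsplit : ∀ n : ℕ,
      (∑ c ∈ Finset.univ.filter (fun c : Fin n → ZMod 2 => c ∈ C n),
        ∑ b : Fin n → Bool, ∑ y : Fin n → ZMod 2,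
          (1 / (Nat.card (C n) : ℝ))
            * δ ^ (Finset.univ.filter (fun i => b i = true)).card
            * (1 - δ) ^ (n - (Finset.univ.filter (fun i => b i = true)).card)
            * (1 / 2 ^ n)
            * (if ∃ c' ∈ C n,
                (hammingDist c' (fun i => if b i then y i else c i) : ℝ) ≤ 2 * δ * n
              then (1 : ℝ) else 0)) = 1 - G n := by
    intro n
    rw [eq_sub_iff_add_eq, hG]
    rw [← Finset.sum_add_distrib]
    have : ∀ c ∈ S n,
        (∑ b : Fin n → Bool, ∑ y : Fin n → ZMod 2,
          (1 / (Nat.card (C n) : ℝ))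
            * δ ^ (univ.filter (fun i => b i = true)).card
            * (1 - δ) ^ (n - (univ.filter (fun i => b i = true)).card)
            * (1 / 2 ^ n)
            * (if ∃ c' ∈ C n,
                (hammingDist c' (fun i => if b i then y i else c i) : ℝ) ≤ 2 * δ * n
              then (1 : ℝ) else 0))
        + (∑ b : Fin n → Bool, ∑ y : Fin n → ZMod 2,
          (1 / (Nat.card (C n) : ℝ))
            * δ ^ (univ.filter (fun i => b i = true)).card
            * (1 - δ) ^ (n - (univ.filter (fun i => b i = true)).card)
            * (1 / 2 ^ n)
            * (if ∃ c' ∈ C n,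
                (hammingDist c' (fun i => if b i then y i else c i) : ℝ) ≤ 2 * δ * n
              then (0 : ℝ) else 1))
        = ∑ b : Fin n → Bool, ∑ _y : Fin n → ZMod 2,
          (1 / (Nat.card (C n) : ℝ))
            * δ ^ (univ.filter (fun i => b i = true)).card
            * (1 - δ) ^ (n - (univ.filter (fun i => b i = true)).card)
            * (1 / 2 ^ n) := by
      intro c _
      rw [← Finset.sum_add_distrib]
      refine Finset.sum_congr rfl fun b _ => ?_
      rw [← Finset.sum_add_distrib]
      refine Finset.sum_congr rfl fun y _ => ?_
      split <;> ring
    rw [Finset.sum_congr rfl this]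
    have := stmt18_triple_sum_eval n (1 / (Nat.card (C n) : ℝ)) (S n) δ (1 - δ)
    rw [show δ + (1 - δ) = 1 by ring, one_pow, mul_one] at this
    rw [this, hKcard n]
    field_simp
  -- per-term bound for G
  have hGbound : ∀ n, G n ≤ (2:ℝ) ^ (-(2 * δ * (n:ℕ))) * (1 + δ) ^ n := by
    intro n
    have hterm : ∀ c ∈ S n, ∀ b : Fin n → Bool, ∀ y : Fin n → ZMod 2,
        (1 / (Nat.card (C n) : ℝ))
          * δ ^ (univ.filter (fun i => b i = true)).card
          * (1 - δ) ^ (n - (univ.filter (fun i => b i = true)).card)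
          * (1 / 2 ^ n)
          * (if ∃ c' ∈ C n,
              (hammingDist c' (fun i => if b i then y i else c i) : ℝ) ≤ 2 * δ * n
            then (0 : ℝ) else 1)
        ≤ ((2:ℝ) ^ (-(2 * δ * (n:ℕ))) / (Nat.card (C n) : ℝ))
          * (2 * δ) ^ (univ.filter (fun i => b i = true)).card
          * (1 - δ) ^ (n - (univ.filter (fun i => b i = true)).card)
          * (1 / 2 ^ n) := by
      intro c hc b y
      set k := (univ.filter (fun i => b i = true)).card with hk
      have hrhseq : ((2:ℝ) ^ (-(2 * δ * (n:ℕ))) / (Nat.card (C n) : ℝ))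
            * (2 * δ) ^ k * (1 - δ) ^ (n - k) * (1 / 2 ^ n)
          = ((1 / (Nat.card (C n) : ℝ)) * δ ^ k * (1 - δ) ^ (n - k) * (1 / 2 ^ n))
            * ((2:ℝ) ^ k * (2:ℝ) ^ (-(2 * δ * (n:ℕ)))) := by
        rw [mul_pow]
        ring
      have hwnonneg : (0:ℝ) ≤ (1 / (Nat.card (C n) : ℝ)) * δ ^ k * (1 - δ) ^ (n - k)
          * (1 / 2 ^ n) := by
        have h1 : (0:ℝ) ≤ (1 - δ) ^ (n - k) := pow_nonneg (by linarith) _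
        have h3 : (0:ℝ) ≤ 1 / (Nat.card (C n) : ℝ) := by positivity
        have h4 : (0:ℝ) ≤ δ ^ k := by positivity
        have h5 : (0:ℝ) ≤ 1 / (2:ℝ) ^ n := by positivity
        exact mul_nonneg (mul_nonneg (mul_nonneg h3 h4) h1) h5
      by_cases hP : ∃ c' ∈ C n,
          (hammingDist c' (fun i => if b i then y i else c i) : ℝ) ≤ 2 * δ * n
      · rw [if_pos hP, hrhseq, mul_zero]
        apply mul_nonneg hwnonneg
        positivity
      · rw [if_neg hP, hrhseq, mul_one]
        have hdle : hammingDist c (fun i => if b i then y i else c i) ≤ k := by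
          have heq : hammingDist c (fun i => if b i then y i else c i)
              = (univ.filter fun i => c i ≠ (if b i then y i else c i)).card := rfl
          rw [heq, hk]
          apply Finset.card_le_card
          intro i hi
          rw [Finset.mem_filter] at hi ⊢
          refine ⟨Finset.mem_univ _, ?_⟩
          by_contra hf
          rw [if_neg hf] at hi
          exact hi.2 rfl
        have hkgt : 2 * δ * (n:ℕ) < (k:ℝ) := by
          push_neg at hP
          have := hP c ((hSmem n c).1 hc)
          calc 2 * δ * (n:ℕ)
              < (hammingDist c (fun i => if b i then y i else c i) : ℝ) := this
            _ ≤ (k:ℝ) := by exact_mod_cast hdle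
        have hone : (1:ℝ) ≤ (2:ℝ) ^ k * (2:ℝ) ^ (-(2 * δ * (n:ℕ))) := by
          rw [← Real.rpow_natCast 2 k, ← Real.rpow_add two_pos]
          calc (1:ℝ) = (2:ℝ) ^ (0:ℝ) := (Real.rpow_zero 2).symm
            _ ≤ (2:ℝ) ^ ((k:ℝ) + -(2 * δ * (n:ℕ))) :=
                Real.rpow_le_rpow_of_exponent_le one_le_two (by linarith)
        calc (1 / (Nat.card (C n) : ℝ)) * δ ^ k * (1 - δ) ^ (n - k) * (1 / 2 ^ n)
            = ((1 / (Nat.card (C n) : ℝ)) * δ ^ k * (1 - δ) ^ (n - k) * (1 / 2 ^ n)) * 1 := by ring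
          _ ≤ _ := mul_le_mul_of_nonneg_left hone hwnonneg
    have hsum : G n ≤ ∑ c ∈ S n, ∑ b : Fin n → Bool, ∑ _y : Fin n → ZMod 2,
        ((2:ℝ) ^ (-(2 * δ * (n:ℕ))) / (Nat.card (C n) : ℝ))
          * (2 * δ) ^ (univ.filter (fun i => b i = true)).card
          * (1 - δ) ^ (n - (univ.filter (fun i => b i = true)).card)
          * (1 / 2 ^ n) := by
      rw [hG]
      apply Finset.sum_le_sum; intro c hc
      apply Finset.sum_le_sum; intro b _
      apply Finset.sum_le_sum; intro y _
      exact hterm c hc b y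
    have heval := stmt18_triple_sum_eval n
      ((2:ℝ) ^ (-(2 * δ * (n:ℕ))) / (Nat.card (C n) : ℝ)) (S n) (2 * δ) (1 - δ)
    rw [show 2 * δ + (1 - δ) = 1 + δ by ring] at heval
    rw [heval] at hsum
    calc G n ≤ ((S n).card : ℝ) * ((2:ℝ) ^ (-(2 * δ * (n:ℕ))) / (Nat.card (C n) : ℝ)
        * (1 + δ) ^ n) := hsum
      _ = (2:ℝ) ^ (-(2 * δ * (n:ℕ))) * (1 + δ) ^ n := by
        rw [hKcard n]
        have hpos : (0:ℝ) < ((S n).card : ℝ) := by exact_mod_cast Finset.card_pos.2 (hSne n)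
        field_simp
  have hGexp : ∀ n : ℕ, G n ≤ (Real.exp (-a)) ^ n := by
    intro n
    calc G n ≤ (2:ℝ) ^ (-(2 * δ * (n:ℕ))) * (1 + δ) ^ n := hGbound n
      _ ≤ Real.exp (Real.log 2 * (-(2 * δ * (n:ℕ)))) * Real.exp ((n:ℕ) * δ) := by
          rw [Real.rpow_def_of_pos two_pos]
          apply mul_le_mul_of_nonneg_left _ (Real.exp_nonneg _)
          calc (1 + δ) ^ n ≤ (Real.exp δ) ^ n := by
                apply pow_le_pow_left₀ (by linarith)
                linarith [Real.add_one_le_exp δ]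
            _ = Real.exp ((n:ℕ) * δ) := (Real.exp_nat_mul δ n).symm
      _ = Real.exp (Real.log 2 * (-(2 * δ * (n:ℕ))) + (n:ℕ) * δ) := (Real.exp_add _ _).symm
      _ = Real.exp ((n:ℕ) * (-a)) := by
          congr 1
          rw [ha]
          ring
      _ = (Real.exp (-a)) ^ n := Real.exp_nat_mul _ n
  have hexp_lim : Filter.Tendsto (fun n : ℕ => (Real.exp (-a)) ^ n) Filter.atTop (nhds 0) :=
    tendsto_pow_atTop_nhds_zero_of_lt_one (Real.exp_nonneg _)
      (Real.exp_lt_one_iff.2 (by linarith))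
  have hGlim : Filter.Tendsto G Filter.atTop (nhds 0) :=
    squeeze_zero hGnonneg hGexp hexp_lim
  have : Filter.Tendsto (fun n => 1 - G n) Filter.atTop (nhds 1) := by
    have := hGlim.const_sub 1
    rwa [sub_zero] at this
  refine this.congr fun n => (hsplit n).symm
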